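/- For R > 0, θ ∈ (0, π), n ∈ ℕ₊ and R_n = Rθ/(2πn + θ), the curve x_n(s,t) = (R_n cos(s/R_n), R_n sin(s/R_n), t/R_n) solves the LIE x_t = x_s × x_ss, satisfies |∂_s x_n| = 1, and its third component satisfies |x_{n,3}(s,t) − x^R_3(s,t)| = (2πn/(Rθ)) t for all s ∈ (0, θR) and t ≥ 0, where x^R(s,t) = (R cos(s/R), R sin(s/R), t/R). -/

import Mathlib

open MeasureTheory RealInnerProductSpace

noncomputable section

abbrev E3 := EuclideanSpace ℝ (Fin 3)

/-- Cross product on `ℝ³`. -/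
def cross (u v : E3) : E3 :=
  (WithLp.equiv 2 (Fin 3 → ℝ)).symm
    ![u 1 * v 2 - u 2 * v 1, u 2 * v 0 - u 0 * v 2, u 0 * v 1 - u 1 * v 0]

/-- Partial derivative in the first (space) variable. -/
def pd1 (f : ℝ → ℝ → E3) (s t : ℝ) : E3 := deriv (fun s' => f s' t) s

/-- Partial derivative in the second (time) variable. -/
def pd2 (f : ℝ → ℝ → E3) (s t : ℝ) : E3 := deriv (fun t' => f s t') t

/-- The arc-shaped filament. -/
def xR (R : ℝ) (s t : ℝ) : E3 :=
  (WithLp.equiv 2 (Fin 3 → ℝ)).symm ![R * Real.cos (s / R), R * Real.sin (s / R), t / R]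

namespace OptAux

def eE3 : (Fin 3 → ℝ) ≃L[ℝ] E3 := (PiLp.continuousLinearEquiv 2 ℝ (fun _ : Fin 3 => ℝ)).symm

lemma hasDerivAt_E3 {g : ℝ → Fin 3 → ℝ} {g' : Fin 3 → ℝ} {x : ℝ}
    (h : ∀ i, HasDerivAt (fun x => g x i) (g' i) x) :
    HasDerivAt (fun x => (WithLp.equiv 2 (Fin 3 → ℝ)).symm (g x))
      ((WithLp.equiv 2 (Fin 3 → ℝ)).symm g') x :=
  eE3.toContinuousLinearMap.hasFDerivAt.comp_hasDerivAt x (hasDerivAt_pi.2 h)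

def v1 (r s : ℝ) : E3 :=
  (WithLp.equiv 2 (Fin 3 → ℝ)).symm ![-Real.sin (s / r), Real.cos (s / r), 0]

def v2 (r s : ℝ) : E3 :=
  (WithLp.equiv 2 (Fin 3 → ℝ)).symm ![-(Real.cos (s / r) / r), -(Real.sin (s / r) / r), 0]

def vT (r : ℝ) : E3 := (WithLp.equiv 2 (Fin 3 → ℝ)).symm ![0, 0, 1 / r]

lemma hasDerivAt_div (r x : ℝ) : HasDerivAt (fun y : ℝ => y / r) (1 / r) x :=
  (hasDerivAt_id x).div_const r

lemma hasDerivAt_xR_s (r : ℝ) (hr : r ≠ 0) (t s : ℝ) :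
    HasDerivAt (fun s' => xR r s' t) (v1 r s) s := by
  apply hasDerivAt_E3
  intro i
  fin_cases i
  · simp only [Fin.zero_eta, Matrix.cons_val_zero]
    have h := ((Real.hasDerivAt_cos (s / r)).comp s (hasDerivAt_div r s)).const_mul r
    refine h.congr_deriv ?_
    field_simp
  · simp only [Fin.mk_one, Matrix.cons_val_one, Matrix.head_cons, Matrix.cons_val_zero]
    have h := ((Real.hasDerivAt_sin (s / r)).comp s (hasDerivAt_div r s)).const_mul r
    refine h.congr_deriv ?_
    field_simp
  · simpa using hasDerivAt_const s (t / r)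

lemma pd1_xR (r : ℝ) (hr : r ≠ 0) (s t : ℝ) : pd1 (xR r) s t = v1 r s :=
  (hasDerivAt_xR_s r hr t s).deriv

lemma hasDerivAt_v1 (r : ℝ) (hr : r ≠ 0) (s : ℝ) :
    HasDerivAt (fun s' => v1 r s') (v2 r s) s := by
  apply hasDerivAt_E3
  intro i
  fin_cases i
  · simp only [Fin.zero_eta, Matrix.cons_val_zero]
    have h := ((Real.hasDerivAt_sin (s / r)).comp s (hasDerivAt_div r s)).neg
    refine h.congr_deriv ?_
    field_simp
  · simp only [Fin.mk_one, Matrix.cons_val_one, Matrix.head_cons, Matrix.cons_val_zero]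
    have h := (Real.hasDerivAt_cos (s / r)).comp s (hasDerivAt_div r s)
    refine h.congr_deriv ?_
    field_simp
  · simpa using hasDerivAt_const s (0 : ℝ)

lemma pd1_pd1_xR (r : ℝ) (hr : r ≠ 0) (s t : ℝ) : pd1 (pd1 (xR r)) s t = v2 r s := by
  have : (fun s' => pd1 (xR r) s' t) = fun s' => v1 r s' := funext fun s' => pd1_xR r hr s' t
  rw [pd1, this]
  exact (hasDerivAt_v1 r hr s).deriv

lemma pd2_xR (r : ℝ) (s t : ℝ) : pd2 (xR r) s t = vT r := by
  refine HasDerivAt.deriv ?_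
  apply hasDerivAt_E3
  intro i
  fin_cases i
  · simpa using hasDerivAt_const t (r * Real.cos (s / r))
  · simpa using hasDerivAt_const t (r * Real.sin (s / r))
  · simpa using hasDerivAt_div r t

lemma cross_v1_v2 (r s : ℝ) : cross (v1 r s) (v2 r s) = vT r := by
  unfold cross v1 v2 vT
  ext i
  fin_cases i <;>
    simp [WithLp.equiv_symm_apply, PiLp.toLp_apply] <;> ring_nf
  rw [← mul_add, Real.sin_sq_add_cos_sq, mul_one]

lemma norm_v1 (r s : ℝ) : ‖v1 r s‖ = 1 := by
  rw [EuclideanSpace.norm_eq]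
  simp [Fin.sum_univ_three, WithLp.equiv_symm_apply, PiLp.toLp_apply, v1, Real.sin_sq_add_cos_sq]

end OptAux

open OptAux in
/-- the looped arc gives the optimal linear growth rate. -/
theorem optimality_of_linear_growth (R θ : ℝ) (hR : 0 < R) (hθ : θ ∈ Set.Ioo 0 Real.pi)
    (n : ℕ) (hn : 0 < n) :
    let Rn : ℝ := R * θ / (2 * Real.pi * n + θ)
    let xn : ℝ → ℝ → E3 := xR Rn
    (∀ s t : ℝ, pd2 xn s t = cross (pd1 xn s t) (pd1 (pd1 xn) s t)) ∧
    (∀ s t : ℝ, ‖pd1 xn s t‖ = 1) ∧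
    (∀ s ∈ Set.Ioo (0:ℝ) (θ * R), ∀ t : ℝ, 0 ≤ t →
      |xn s t 2 - xR R s t 2| = (2 * Real.pi * n / (R * θ)) * t) := by
  intro Rn xn
  have hθ0 : 0 < θ := hθ.1
  have hden : 0 < 2 * Real.pi * n + θ := by
    have : (0:ℝ) ≤ 2 * Real.pi * n := by positivity
    linarith
  have hRnpos : 0 < Rn := by
    show 0 < R * θ / (2 * Real.pi * n + θ)
    positivity
  have hRn : Rn ≠ 0 := ne_of_gt hRnpos
  refine ⟨fun s t => ?_, fun s t => ?_, fun s _ t ht => ?_⟩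
  · show pd2 (xR Rn) s t = cross (pd1 (xR Rn) s t) (pd1 (pd1 (xR Rn)) s t)
    rw [pd2_xR, pd1_xR Rn hRn, pd1_pd1_xR Rn hRn, cross_v1_v2]
  · show ‖pd1 (xR Rn) s t‖ = 1
    rw [pd1_xR Rn hRn]
    exact norm_v1 Rn s
  · have h2 : xn s t 2 = t / Rn := by
      show xR Rn s t 2 = t / Rn
      simp [xR, WithLp.equiv_symm_apply, PiLp.toLp_apply]
    have h3 : xR R s t 2 = t / R := by
      simp [xR, WithLp.equiv_symm_apply, PiLp.toLp_apply]
    rw [h2, h3]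
    have key : t / Rn - t / R = 2 * Real.pi * n / (R * θ) * t := by
      have hRnval : Rn = R * θ / (2 * Real.pi * n + θ) := rfl
      rw [hRnval]
      field_simp
      ring
    rw [key, abs_of_nonneg]
    positivity
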